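/- arXiv:1211.0978 — 8 statements merged into one kernel-verified Lean document; each statement's English description precedes it below -/
import Mathlib

section
/- Let G = (V,E) be a graph, let v ∈ V with N₃(v) ≠ ∅ (where N₃(v) is the set of neighbors u of v such that N(u) ⊆ N(v) ∪ {v} and u has no neighbor w with N(w) \ (N(v) ∪ {v}) ≠ ∅). If D is a total dominating set of G with v ∉ D, then there exists a vertex u ∈ D ∩ N(v) with N(u) ⊆ N(v) ∪ {v}, and the set D' = (D \ {u}) ∪ {v} is also a total dominating set of G with |D'| ≤ |D|. -/
def N1 {V : Type*} (G : SimpleGraph V) (v : V) : Set V :=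
  {u | G.Adj v u ∧ ∃ x, G.Adj u x ∧ x ∉ G.neighborSet v ∪ {v}}

def N2 {V : Type*} (G : SimpleGraph V) (v : V) : Set V :=
  {u | G.Adj v u ∧ u ∉ N1 G v ∧ ∃ x ∈ N1 G v, G.Adj u x}

def N3 {V : Type*} (G : SimpleGraph V) (v : V) : Set V :=
  {u | G.Adj v u ∧ u ∉ N1 G v ∧ u ∉ N2 G v}

/-- if N₃(v) ≠ ∅ and D is a total dominating set avoiding v, then some
u ∈ D ∩ N(v) has N(u) ⊆ N(v) ∪ {v}, and exchanging u for v preserves total domination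
without increasing the size. -/
theorem exchange_vertex_for_confined_dominator {V : Type*} (G : SimpleGraph V) (v : V)
    (hN3 : (N3 G v).Nonempty)
    (D : Set V) (hDfin : D.Finite)
    (hD : ∀ u : V, ∃ d ∈ D, G.Adj u d) (hv : v ∉ D) :
    ∃ u ∈ D, u ∈ G.neighborSet v ∧ G.neighborSet u ⊆ G.neighborSet v ∪ {v} ∧
      (∀ x : V, ∃ d ∈ (D \ {u}) ∪ {v}, G.Adj x d) ∧
      ((D \ {u}) ∪ {v}).ncard ≤ D.ncard := by
  classical
  obtain ⟨w, hwadj, hwN1, hwN2⟩ := hN3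
  -- neighbors of w are confined
  have hwconf : ∀ x, G.Adj w x → x ∈ G.neighborSet v ∪ {v} := by
    intro x hx
    by_contra hxn
    exact hwN1 ⟨hwadj, x, hx, hxn⟩
  -- w has a dominator u in D
  obtain ⟨u, huD, hwu⟩ := hD w
  have huv : u ≠ v := fun h => hv (h ▸ huD)
  have huNv : u ∈ G.neighborSet v := by
    have := hwconf u hwu
    rcases this with h | h
    · exact h
    · exact absurd h huv
  -- u ∉ N1
  have huN1 : u ∉ N1 G v := by
    intro hu
    exact hwN2 ⟨hwadj, hwN1, u, hu, hwu⟩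
  have huconf : G.neighborSet u ⊆ G.neighborSet v ∪ {v} := by
    intro x hx
    by_contra hxn
    exact huN1 ⟨huNv, x, hx, hxn⟩
  refine ⟨u, huD, huNv, huconf, ?_, ?_⟩
  · -- total domination of D'
    intro x
    by_cases hxv : x = v
    · -- dominator of u in D, which is ≠ u and adj v
      obtain ⟨d, hdD, hud⟩ := hD u
      have hdv : d ≠ v := fun h => hv (h ▸ hdD)
      have hdNv : G.Adj v d := by
        have := huconf hud
        rcases this with h | h
        · exact h
        · exact absurd h hdv
      have hdu : d ≠ u := fun h => G.irrefl (h ▸ hud)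
      exact ⟨d, Or.inl ⟨hdD, hdu⟩, hxv ▸ hdNv⟩
    · obtain ⟨d, hdD, hxd⟩ := hD x
      by_cases hdu : d = u
      · -- x adj u, so x ∈ N(v) ∪ {v}; x ≠ v so x adj v
        have hxu : G.Adj u x := (hdu ▸ hxd).symm
        have := huconf hxu
        rcases this with h | h
        · exact ⟨v, Or.inr rfl, h.symm⟩
        · exact absurd h hxv
      · exact ⟨d, Or.inl ⟨hdD, hdu⟩, hxd⟩
  · -- cardinality
    have h1 : ((D \ {u}) ∪ {v}).ncard = (insert v (D \ {u})).ncard := by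
      congr 1
      ext x; simp [or_comm]
    rw [h1]
    have hfin : (D \ {u}).Finite := hDfin.diff
    calc (insert v (D \ {u})).ncard ≤ (D \ {u}).ncard + 1 :=
          Set.ncard_insert_le _ _
      _ = D.ncard - 1 + 1 := by rw [Set.ncard_diff_singleton_of_mem huD]
      _ ≤ D.ncard := by
          have : 0 < D.ncard := (Set.ncard_pos hDfin).mpr ⟨u, huD⟩
          omega
end

section
/- Let G = (V,E) be a graph, v ∈ V with N₃(v) ≠ ∅, and let G' be obtained from G by deleting all vertices of N₂(v) ∪ N₃(v) and adding a new vertex v' adjacent only to v. Then γₜ(G) = γₜ(G'), where γₜ denotes the minimum size of a total dominating set. -/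
def IsTDS {V : Type*} (G : SimpleGraph V) (D : Set V) : Prop :=
  ∀ u : V, ∃ d ∈ D, G.Adj u d

noncomputable def gammaT {V : Type*} (G : SimpleGraph V) : ℕ :=
  sInf {n | ∃ D : Set V, D.Finite ∧ D.ncard = n ∧ IsTDS G D}

/-- The graph G' obtained from G by deleting the vertices of N₂(v) ∪ N₃(v) and
adding a fresh pendant vertex v' adjacent only to v. The left summand consists of the
surviving vertices of G, the right summand (`Sum.inr ()`) is the new vertex v'. -/
def reducedGraph {V : Type*} (G : SimpleGraph V) (v : V) :
    SimpleGraph ({u : V // u ∉ N2 G v ∧ u ∉ N3 G v} ⊕ Unit) :=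
  SimpleGraph.fromRel (fun a b =>
    match a, b with
    | Sum.inl a, Sum.inl b => G.Adj a.1 b.1
    | Sum.inl a, Sum.inr _ => a.1 = v
    | Sum.inr _, _ => False)

section helpers
variable {V : Type*} (G : SimpleGraph V) (v : V)

lemma mem_N2N3_of_adj {u : V} (h : G.Adj v u) (h1 : u ∉ N1 G v) :
    u ∈ N2 G v ∪ N3 G v := by
  by_cases h2 : u ∈ N2 G v
  · exact Or.inl h2
  · exact Or.inr ⟨h, h1, h2⟩

lemma nbr_of_N2N3 {d x : V} (hd : d ∈ N2 G v ∪ N3 G v) (hx : G.Adj d x) :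
    G.Adj v x ∨ x = v := by
  have h1 : d ∉ N1 G v := by
    rcases hd with hd | hd
    · exact hd.2.1
    · exact hd.2.1
  have hadj : G.Adj v d := by rcases hd with hd | hd <;> exact hd.1
  by_contra h
  push_neg at h
  exact h1 ⟨hadj, x, hx, by
    simp only [Set.mem_union, SimpleGraph.mem_neighborSet, Set.mem_singleton_iff]
    push_neg
    exact ⟨h.1, h.2⟩⟩

lemma nbr_of_N3 {w x : V} (hw : w ∈ N3 G v) (hx : G.Adj w x) :
    x = v ∨ x ∈ N2 G v ∪ N3 G v := by
  rcases nbr_of_N2N3 G v (Or.inr hw) hx with h | h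
  · right
    refine mem_N2N3_of_adj G v h ?_
    intro hx1
    exact hw.2.2 ⟨hw.1, hw.2.1, x, hx1, hx⟩
  · exact Or.inl h

lemma v_surv : v ∉ N2 G v ∧ v ∉ N3 G v := by
  constructor
  · intro h; exact G.irrefl h.1
  · intro h; exact G.irrefl h.1

lemma rg_adj_inl_inl {a b : {u : V // u ∉ N2 G v ∧ u ∉ N3 G v}} :
    (reducedGraph G v).Adj (Sum.inl a) (Sum.inl b) ↔ G.Adj a.1 b.1 := by
  simp only [reducedGraph, SimpleGraph.fromRel_adj]
  constructor
  · rintro ⟨hne, h | h⟩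
    · exact h
    · exact h.symm
  · intro h
    exact ⟨by simp [Sum.inl.injEq]; rintro rfl; exact G.irrefl h, Or.inl h⟩

lemma rg_adj_inl_inr {a : {u : V // u ∉ N2 G v ∧ u ∉ N3 G v}} {u : Unit} :
    (reducedGraph G v).Adj (Sum.inl a) (Sum.inr u) ↔ a.1 = v := by
  simp only [reducedGraph, SimpleGraph.fromRel_adj]
  constructor
  · rintro ⟨hne, h | h⟩
    · exact h
    · exact h.elim
  · intro h
    exact ⟨by simp, Or.inl h⟩

lemma rg_not_adj_inr_inr {u u' : Unit} :
    ¬ (reducedGraph G v).Adj (Sum.inr u) (Sum.inr u') := by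
  simp only [reducedGraph, SimpleGraph.fromRel_adj]
  rintro ⟨hne, h | h⟩ <;> exact h

end helpers

section main
variable {V : Type*} (G : SimpleGraph V) (v : V)

lemma le_dir1 (hN3 : (N3 G v).Nonempty)
    {D' : Set ({u : V // u ∉ N2 G v ∧ u ∉ N3 G v} ⊕ Unit)}
    (hfin : D'.Finite) (htds : IsTDS (reducedGraph G v) D') :
    ∃ D : Set V, D.Finite ∧ IsTDS G D ∧ D.ncard ≤ D'.ncard := by
  classical
  obtain ⟨w, hw⟩ := hN3
  set v₀ : {u : V // u ∉ N2 G v ∧ u ∉ N3 G v} := ⟨v, v_surv G v⟩ with hv₀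
  have hv0 : Sum.inl v₀ ∈ D' := by
    obtain ⟨d, hd, hadj⟩ := htds (Sum.inr ())
    match d with
    | Sum.inl b =>
      have hb : b.1 = v := (rg_adj_inl_inr G v).mp hadj.symm
      have : b = v₀ := Subtype.ext hb
      rwa [this] at hd
    | Sum.inr u' => exact absurd hadj (rg_not_adj_inr_inr G v)
  set Dl : Set {u : V // u ∉ N2 G v ∧ u ∉ N3 G v} := Sum.inl ⁻¹' D' with hDl
  have hDlfin : Dl.Finite := hfin.preimage Sum.inl_injective.injOn
  set D₀ : Set V := Subtype.val '' Dl with hD₀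
  have hD₀fin : D₀.Finite := hDlfin.image _
  have hvD : v ∈ D₀ := ⟨v₀, hv0, rfl⟩
  set Dli : Set ({u : V // u ∉ N2 G v ∧ u ∉ N3 G v} ⊕ Unit) := Sum.inl '' Dl with hDli
  have hDlcard : Dl.ncard = Dli.ncard :=
    (Set.ncard_image_of_injective _ Sum.inl_injective).symm
  have hD₀card : D₀.ncard = Dl.ncard := Set.ncard_image_of_injective _ Subtype.val_injective
  have himgsub : Dli ⊆ D' := by
    rintro x ⟨b, hb, rfl⟩; exact hb
  -- domination of surviving and deleted vertices
  have hdom : ∀ u : V, (∃ d ∈ D₀, G.Adj u d) ∨ (u = v ∧ Sum.inr () ∈ D') := by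
    intro u
    by_cases hu : u ∉ N2 G v ∧ u ∉ N3 G v
    · obtain ⟨d, hd, hadj⟩ := htds (Sum.inl ⟨u, hu⟩)
      match d with
      | Sum.inl b =>
        exact Or.inl ⟨b.1, ⟨b, hd, rfl⟩, (rg_adj_inl_inl G v).mp hadj⟩
      | Sum.inr u' =>
        cases u'
        exact Or.inr ⟨(rg_adj_inl_inr G v).mp hadj, hd⟩
    · push_neg at hu
      have huv : G.Adj v u := by
        by_cases h2 : u ∈ N2 G v
        · exact h2.1
        · exact (hu h2).1
      exact Or.inl ⟨v, hvD, huv.symm⟩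
  by_cases hin : Sum.inr () ∈ D'
  · refine ⟨insert w D₀, hD₀fin.insert w, ?_, ?_⟩
    · intro u
      rcases hdom u with ⟨d, hd, hadj⟩ | ⟨rfl, _⟩
      · exact ⟨d, Set.mem_insert_of_mem _ hd, hadj⟩
      · exact ⟨w, Set.mem_insert _ _, hw.1⟩
    · have h1 : (insert w D₀).ncard ≤ D₀.ncard + 1 := Set.ncard_insert_le _ _
      have h2 : (insert (Sum.inr ()) Dli).ncard = Dli.ncard + 1 :=
        Set.ncard_insert_of_notMem (by simp [hDli]) (hDlfin.image _)
      have h3 : insert (Sum.inr ()) Dli ⊆ D' :=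
        Set.insert_subset hin himgsub
      have h4 := Set.ncard_le_ncard h3 hfin
      omega
  · refine ⟨D₀, hD₀fin, ?_, ?_⟩
    · intro u
      rcases hdom u with ⟨d, hd, hadj⟩ | ⟨rfl, h⟩
      · exact ⟨d, hd, hadj⟩
      · exact absurd h hin
    · have h4 := Set.ncard_le_ncard himgsub hfin
      omega

end main

section main2
variable {V : Type*} (G : SimpleGraph V) (v : V)

lemma le_dir2 (hN3 : (N3 G v).Nonempty)
    {D : Set V} (hfin : D.Finite) (htds : IsTDS G D) :
    ∃ D' : Set ({u : V // u ∉ N2 G v ∧ u ∉ N3 G v} ⊕ Unit),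
      D'.Finite ∧ IsTDS (reducedGraph G v) D' ∧ D'.ncard ≤ D.ncard := by
  classical
  obtain ⟨w, hw⟩ := hN3
  set v₀ : {u : V // u ∉ N2 G v ∧ u ∉ N3 G v} := ⟨v, v_surv G v⟩ with hv₀
  set ι : V → ({u : V // u ∉ N2 G v ∧ u ∉ N3 G v} ⊕ Unit) :=
    fun u => if h : u ∉ N2 G v ∧ u ∉ N3 G v then Sum.inl ⟨u, h⟩ else Sum.inr ()
    with hι
  have hιv : ι v = Sum.inl v₀ := dif_pos (v_surv G v)
  set T : Set V := insert v (D \ (N2 G v ∪ N3 G v)) with hT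
  have hTfin : T.Finite := hfin.diff.insert v
  set Base : Set ({u : V // u ∉ N2 G v ∧ u ∉ N3 G v} ⊕ Unit) := ι '' T with hBase
  have hBasefin : Base.Finite := hTfin.image _
  have hBasecard : Base.ncard ≤ T.ncard := Set.ncard_image_le hTfin
  have hvT : v ∈ T := Set.mem_insert _ _
  have hv₀Base : Sum.inl v₀ ∈ Base := ⟨v, hvT, hιv⟩
  -- membership of ι u in Base for good u
  have hιmem : ∀ u ∈ D, (hu : u ∉ N2 G v ∧ u ∉ N3 G v) →
      Sum.inl (⟨u, hu⟩ : {u : V // u ∉ N2 G v ∧ u ∉ N3 G v}) ∈ Base := by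
    intro u hu h
    refine ⟨u, Set.mem_insert_of_mem _ ⟨hu, ?_⟩, dif_pos h⟩
    rintro (h2 | h3)
    · exact h.1 h2
    · exact h.2 h3
  -- the new pendant is always dominated by v₀
  have hinr_dom : ∃ d ∈ Base, (reducedGraph G v).Adj (Sum.inr ()) d :=
    ⟨Sum.inl v₀, hv₀Base, ((rg_adj_inl_inr G v).mpr rfl).symm⟩
  -- every surviving vertex other than v is dominated by Base
  have hbase_dom : ∀ b : {u : V // u ∉ N2 G v ∧ u ∉ N3 G v},
      (∃ d ∈ Base, (reducedGraph G v).Adj (Sum.inl b) d) ∨ b.1 = v := by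
    intro b
    obtain ⟨d, hd, hadj⟩ := htds b.1
    by_cases hds : d ∉ N2 G v ∧ d ∉ N3 G v
    · exact Or.inl ⟨Sum.inl ⟨d, hds⟩, hιmem d hd hds, (rg_adj_inl_inl G v).mpr hadj⟩
    · push_neg at hds
      have hdmem : d ∈ N2 G v ∪ N3 G v := by
        by_cases h2 : d ∈ N2 G v
        · exact Or.inl h2
        · exact Or.inr (hds h2)
      rcases nbr_of_N2N3 G v hdmem hadj.symm with h | h
      · exact Or.inl ⟨Sum.inl v₀, hv₀Base, (rg_adj_inl_inl G v).mpr h.symm⟩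
      · exact Or.inr h
  by_cases hc : ∃ c ∈ D, c ∈ N1 G v
  · -- D contains an N1-vertex : no pendant needed
    obtain ⟨c, hcD, hcN1⟩ := hc
    have hcs : c ∉ N2 G v ∧ c ∉ N3 G v := ⟨fun h => h.2.1 hcN1, fun h => h.2.1 hcN1⟩
    refine ⟨Base, hBasefin, ?_, ?_⟩
    · rintro (b | u)
      · rcases hbase_dom b with h | h
        · exact h
        · refine ⟨Sum.inl ⟨c, hcs⟩, hιmem c hcD hcs, ?_⟩
          rw [rg_adj_inl_inl]
          rw [h]
          exact hcN1.1
      · cases u; exact hinr_dom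
    · -- cardinality
      by_cases hvD : v ∈ D
      · have hsub : T ⊆ D := by
          rintro x (rfl | hx)
          · exact hvD
          · exact hx.1
        exact hBasecard.trans (Set.ncard_le_ncard hsub hfin)
      · obtain ⟨d, hd, hadj⟩ := htds w
        have hdmem : d ∈ N2 G v ∪ N3 G v := by
          rcases nbr_of_N3 G v hw hadj with h | h
          · exact absurd (h ▸ hd) hvD
          · exact h
        have h1 : T.ncard ≤ (D \ (N2 G v ∪ N3 G v)).ncard + 1 := Set.ncard_insert_le _ _
        have h2 : (D \ (N2 G v ∪ N3 G v)) ⊆ D \ {d} := by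
          rintro x ⟨hx1, hx2⟩
          exact ⟨hx1, fun h => hx2 (h ▸ hdmem)⟩
        have h3 := Set.ncard_le_ncard h2 hfin.diff
        have h4 : (D \ {d}).ncard + 1 = D.ncard :=
          Set.ncard_diff_singleton_add_one hd hfin
        omega
  · -- no N1-vertex in D : use the pendant
    push_neg at hc
    -- v's dominator lies in N2 ∪ N3
    obtain ⟨a, haD, hav⟩ := htds v
    have haN : a ∈ N2 G v ∪ N3 G v := mem_N2N3_of_adj G v hav (hc a haD)
    refine ⟨insert (Sum.inr ()) Base, hBasefin.insert _, ?_, ?_⟩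
    · rintro (b | u)
      · rcases hbase_dom b with ⟨d, hd, hadj⟩ | h
        · exact ⟨d, Set.mem_insert_of_mem _ hd, hadj⟩
        · exact ⟨Sum.inr (), Set.mem_insert _ _, (rg_adj_inl_inr G v).mpr h⟩
      · cases u
        obtain ⟨d, hd, hadj⟩ := hinr_dom
        exact ⟨d, Set.mem_insert_of_mem _ hd, hadj⟩
    · have h0 : (insert (Sum.inr ()) Base).ncard ≤ Base.ncard + 1 :=
        Set.ncard_insert_le _ _
      by_cases hvD : v ∈ D
      · have hsub : T ⊆ D \ {a} := by
          rintro x (rfl | hx)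
          · exact ⟨hvD, fun h => G.irrefl (h ▸ hav)⟩
          · exact ⟨hx.1, fun h => hx.2 (h ▸ haN)⟩
        have h3 := Set.ncard_le_ncard hsub hfin.diff
        have h4 : (D \ {a}).ncard + 1 = D.ncard :=
          Set.ncard_diff_singleton_add_one haD hfin
        omega
      · -- v ∉ D : a's dominator c is a second vertex of D in N2 ∪ N3
        obtain ⟨c, hcD, hac⟩ := htds a
        have hcv : G.Adj v c := by
          rcases nbr_of_N2N3 G v haN hac with h | h
          · exact h
          · exact absurd (h ▸ hcD) hvD
        have hcN : c ∈ N2 G v ∪ N3 G v := mem_N2N3_of_adj G v hcv (hc c hcD)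
        have hca : c ≠ a := fun h => G.irrefl (h ▸ hac)
        have h1 : T.ncard ≤ (D \ (N2 G v ∪ N3 G v)).ncard + 1 := Set.ncard_insert_le _ _
        have h2 : (D \ (N2 G v ∪ N3 G v)) ⊆ (D \ {a}) \ {c} := by
          rintro x ⟨hx1, hx2⟩
          exact ⟨⟨hx1, fun h => hx2 (h ▸ haN)⟩, fun h => hx2 (h ▸ hcN)⟩
        have h3 := Set.ncard_le_ncard h2 hfin.diff.diff
        have h4 : ((D \ {a}) \ {c}).ncard + 1 = (D \ {a}).ncard :=
          Set.ncard_diff_singleton_add_one ⟨hcD, hca⟩ hfin.diff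
        have h5 : (D \ {a}).ncard + 1 = D.ncard :=
          Set.ncard_diff_singleton_add_one haD hfin
        omega

end main2

/-- Rule 1 preserves γₜ: if N₃(v) ≠ ∅ then γₜ(G) = γₜ(G'). -/
theorem rule1_preserves_gammaT {V : Type*} (G : SimpleGraph V) (v : V)
    (hN3 : (N3 G v).Nonempty)
    (hG : ∃ D : Set V, D.Finite ∧ IsTDS G D)
    (hG' : ∃ D' : Set ({u : V // u ∉ N2 G v ∧ u ∉ N3 G v} ⊕ Unit),
      D'.Finite ∧ IsTDS (reducedGraph G v) D') :
    gammaT G = gammaT (reducedGraph G v) := by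
  have hSG : {n | ∃ D : Set V, D.Finite ∧ D.ncard = n ∧ IsTDS G D}.Nonempty := by
    obtain ⟨D, hf, ht⟩ := hG
    exact ⟨D.ncard, D, hf, rfl, ht⟩
  have hSG' : {n | ∃ D' : Set ({u : V // u ∉ N2 G v ∧ u ∉ N3 G v} ⊕ Unit),
      D'.Finite ∧ D'.ncard = n ∧ IsTDS (reducedGraph G v) D'}.Nonempty := by
    obtain ⟨D', hf, ht⟩ := hG'
    exact ⟨D'.ncard, D', hf, rfl, ht⟩
  apply le_antisymm
  · obtain ⟨D', hf, hcard, ht⟩ := Nat.sInf_mem hSG'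
    obtain ⟨D, hDf, hDt, hle⟩ := le_dir1 G v hN3 hf ht
    have h1 : gammaT G ≤ D.ncard := Nat.sInf_le ⟨D, hDf, rfl, hDt⟩
    have h2 : D'.ncard = gammaT (reducedGraph G v) := hcard
    omega
  · obtain ⟨D, hf, hcard, ht⟩ := Nat.sInf_mem hSG
    obtain ⟨D', hDf, hDt, hle⟩ := le_dir2 G v hN3 hf ht
    have h1 : gammaT (reducedGraph G v) ≤ D'.ncard := Nat.sInf_le ⟨D', hDf, rfl, hDt⟩
    have h2 : D.ncard = gammaT G := hcard
    omega
end

section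
/- Let G = (V,E) be a graph and G' = (V',E') the graph defined by: V' = V ∪ {e_{uw} : {u,w} ∈ E} ∪ {v₁, v₂, v₃, v₄ : v ∈ V}, with edges E' = {{u, e_{uw}}, {w, e_{uw}} : {u,w} ∈ E} ∪ {{v,v₁}, {v₁,v₂}, {v₁,v₃}, {v₂,v₄} : v ∈ V}. Then G has a vertex cover of size at most k if and only if G' has a total dominating set of size at most k + 2|V|. -/
/-- Gadget indices: 0 ↦ v₁, 1 ↦ v₂, 2 ↦ v₃, 3 ↦ v₄. -/
abbrev RedV (V : Type*) (G : SimpleGraph V) := V ⊕ G.edgeSet ⊕ (V × Fin 4)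

/-- The subdivision-plus-gadget graph G' of the NP-hardness reduction: each edge {u,w}
of G is replaced by a path u – e_{uw} – w, and each vertex v of G receives a pendant
path v – v₁ – v₂ – v₄ together with an extra leaf v₃ attached to v₁. -/
def redGraph {V : Type*} (G : SimpleGraph V) : SimpleGraph (RedV V G) :=
  SimpleGraph.fromRel (fun a b =>
    match a, b with
    | Sum.inl u, Sum.inr (Sum.inl e) => u ∈ e.1
    | Sum.inl u, Sum.inr (Sum.inr (w, i)) => u = w ∧ i = 0
    | Sum.inr (Sum.inr (w, i)), Sum.inr (Sum.inr (w', j)) =>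
        w = w' ∧ ((i = 0 ∧ j = 1) ∨ (i = 0 ∧ j = 2) ∨ (i = 1 ∧ j = 3))
    | _, _ => False)

section aux
variable {V : Type*} [Fintype V] (G : SimpleGraph V)

lemma red_adj_v0 (v : V) : (redGraph G).Adj (Sum.inl v) (Sum.inr (Sum.inr (v, 0))) :=
  (SimpleGraph.fromRel_adj _ _ _).mpr ⟨by simp, Or.inl ⟨rfl, rfl⟩⟩

lemma red_adj_01 (v : V) :
    (redGraph G).Adj (Sum.inr (Sum.inr (v, (0:Fin 4)))) (Sum.inr (Sum.inr (v, 1))) :=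
  (SimpleGraph.fromRel_adj _ _ _).mpr ⟨by simp, Or.inl ⟨rfl, Or.inl ⟨rfl, rfl⟩⟩⟩

lemma red_adj_02 (v : V) :
    (redGraph G).Adj (Sum.inr (Sum.inr (v, (2:Fin 4)))) (Sum.inr (Sum.inr (v, 0))) :=
  (SimpleGraph.fromRel_adj _ _ _).mpr ⟨by simp, Or.inr ⟨rfl, Or.inr (Or.inl ⟨rfl, rfl⟩)⟩⟩

lemma red_adj_13 (v : V) :
    (redGraph G).Adj (Sum.inr (Sum.inr (v, (3:Fin 4)))) (Sum.inr (Sum.inr (v, 1))) :=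
  (SimpleGraph.fromRel_adj _ _ _).mpr ⟨by simp, Or.inr ⟨rfl, Or.inr (Or.inr ⟨rfl, rfl⟩)⟩⟩

lemma red_adj_edge (e : G.edgeSet) (u : V) (hu : u ∈ e.1) :
    (redGraph G).Adj (Sum.inr (Sum.inl e)) (Sum.inl u) :=
  ((SimpleGraph.fromRel_adj _ _ _).mpr ⟨by simp, Or.inl hu⟩).symm

lemma red_nbr2 (v : V) (d : RedV V G)
    (h : (redGraph G).Adj (Sum.inr (Sum.inr (v, (2:Fin 4)))) d) :
    d = Sum.inr (Sum.inr (v, 0)) := by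
  rw [redGraph, SimpleGraph.fromRel_adj] at h
  obtain ⟨hne, h | h⟩ := h <;>
  · rcases d with u | e | ⟨w, i⟩ <;> simp_all

lemma red_nbr3 (v : V) (d : RedV V G)
    (h : (redGraph G).Adj (Sum.inr (Sum.inr (v, (3:Fin 4)))) d) :
    d = Sum.inr (Sum.inr (v, 1)) := by
  rw [redGraph, SimpleGraph.fromRel_adj] at h
  obtain ⟨hne, h | h⟩ := h <;>
  · rcases d with u | e | ⟨w, i⟩ <;> simp_all

lemma red_nbr_edge (e : G.edgeSet) (d : RedV V G)
    (h : (redGraph G).Adj (Sum.inr (Sum.inl e)) d) :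
    ∃ u, d = Sum.inl u ∧ u ∈ e.1 := by
  rw [redGraph, SimpleGraph.fromRel_adj] at h
  obtain ⟨hne, h | h⟩ := h <;>
  · rcases d with u | e' | ⟨w, i⟩ <;> simp_all

end aux


/-- G has a vertex cover of size ≤ k iff G' has a total dominating set of
size ≤ k + 2|V|. -/
theorem vertexCover_iff_totalDominating {V : Type*} [Fintype V]
    (G : SimpleGraph V) (k : ℕ) :
    (∃ C : Set V, C.ncard ≤ k ∧ ∀ u w : V, G.Adj u w → u ∈ C ∨ w ∈ C) ↔
    (∃ D : Set (RedV V G), D.ncard ≤ k + 2 * Nat.card V ∧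
      ∀ x : RedV V G, ∃ d ∈ D, (redGraph G).Adj x d) := by
  classical
  set f0 : V → RedV V G := fun v => Sum.inr (Sum.inr (v, 0)) with hf0
  set f1 : V → RedV V G := fun v => Sum.inr (Sum.inr (v, 1)) with hf1
  have hf0i : Function.Injective f0 := fun a b h => by simpa [hf0] using h
  have hf1i : Function.Injective f1 := fun a b h => by simpa [hf1] using h
  have hB0 : (f0 '' Set.univ).ncard = Nat.card V := by
    rw [Set.ncard_image_of_injective _ hf0i, Set.ncard_univ]
  have hB1 : (f1 '' Set.univ).ncard = Nat.card V := by
    rw [Set.ncard_image_of_injective _ hf1i, Set.ncard_univ]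
  have hdisj01 : Disjoint (f0 '' Set.univ) (f1 '' Set.univ) := by
    rw [Set.disjoint_left]
    rintro a ⟨v, -, rfl⟩ ⟨w, -, h⟩
    simp [hf0, hf1] at h
  constructor
  · rintro ⟨C, hCk, hCcov⟩
    refine ⟨Sum.inl '' C ∪ (f0 '' Set.univ ∪ f1 '' Set.univ), ?_, ?_⟩
    · calc (Sum.inl '' C ∪ (f0 '' Set.univ ∪ f1 '' Set.univ)).ncard
          ≤ (Sum.inl '' C).ncard + (f0 '' Set.univ ∪ f1 '' Set.univ).ncard :=
            Set.ncard_union_le _ _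
        _ ≤ (Sum.inl '' C).ncard + ((f0 '' Set.univ).ncard + (f1 '' Set.univ).ncard) := by
            exact Nat.add_le_add_left (Set.ncard_union_le _ _) _
        _ ≤ k + 2 * Nat.card V := by
            rw [hB0, hB1, Set.ncard_image_of_injective _ Sum.inl_injective]
            omega
    · rintro (v | e | ⟨v, i⟩)
      · exact ⟨f0 v, by simp, red_adj_v0 G v⟩
      · obtain ⟨s, hs⟩ := e
        induction s using Sym2.ind with
        | _ u w =>
          have he : G.Adj u w := (SimpleGraph.mem_edgeSet G).mp hs
          rcases hCcov u w he with hu | hw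
          · exact ⟨Sum.inl u, Or.inl ⟨u, hu, rfl⟩,
              red_adj_edge G ⟨s(u,w), hs⟩ u (Sym2.mem_mk_left u w)⟩
          · exact ⟨Sum.inl w, Or.inl ⟨w, hw, rfl⟩,
              red_adj_edge G ⟨s(u,w), hs⟩ w (Sym2.mem_mk_right u w)⟩
      · fin_cases i
        · exact ⟨f1 v, by simp, red_adj_01 G v⟩
        · exact ⟨f0 v, by simp, (red_adj_01 G v).symm⟩
        · exact ⟨f0 v, by simp, red_adj_02 G v⟩
        · exact ⟨f1 v, by simp, red_adj_13 G v⟩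
  · rintro ⟨D, hDk, hDdom⟩
    have h0 : ∀ v : V, f0 v ∈ D := by
      intro v
      obtain ⟨d, hd, hadj⟩ := hDdom (Sum.inr (Sum.inr (v, 2)))
      rwa [red_nbr2 G v d hadj] at hd
    have h1 : ∀ v : V, f1 v ∈ D := by
      intro v
      obtain ⟨d, hd, hadj⟩ := hDdom (Sum.inr (Sum.inr (v, 3)))
      rwa [red_nbr3 G v d hadj] at hd
    refine ⟨Sum.inl ⁻¹' D, ?_, ?_⟩
    · have hsub : Sum.inl '' (Sum.inl ⁻¹' D) ∪ (f0 '' Set.univ ∪ f1 '' Set.univ) ⊆ D := by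
        rintro a (⟨v, hv, rfl⟩ | (⟨v, -, rfl⟩ | ⟨v, -, rfl⟩))
        · exact hv
        · exact h0 v
        · exact h1 v
      have hdisjA : Disjoint (Sum.inl '' (Sum.inl ⁻¹' D) : Set (RedV V G))
          (f0 '' Set.univ ∪ f1 '' Set.univ) := by
        rw [Set.disjoint_left]
        rintro a ⟨v, -, rfl⟩ (⟨w, -, h⟩ | ⟨w, -, h⟩) <;> simp [hf0, hf1] at h
      have hcard : (Sum.inl '' (Sum.inl ⁻¹' D) ∪ (f0 '' Set.univ ∪ f1 '' Set.univ)).ncard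
          = (Sum.inl ⁻¹' D).ncard + 2 * Nat.card V := by
        rw [Set.ncard_union_eq hdisjA (Set.toFinite _) (Set.toFinite _),
          Set.ncard_union_eq hdisj01 (Set.toFinite _) (Set.toFinite _),
          Set.ncard_image_of_injective _ Sum.inl_injective, hB0, hB1]
        omega
      have hle := Set.ncard_le_ncard hsub (Set.toFinite D)
      omega
    · intro u w huw
      set e : G.edgeSet := ⟨s(u, w), huw⟩ with he
      obtain ⟨d, hd, hadj⟩ := hDdom (Sum.inr (Sum.inl e))
      obtain ⟨x, rfl, hx⟩ := red_nbr_edge G e d hadj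
      have : x = u ∨ x = w := by
        rwa [he, Sym2.mem_iff] at hx
      rcases this with rfl | rfl
      · exact Or.inl hd
      · exact Or.inr hd
end

section
/- Let G = (V,E) be a graph, let C be a vertex cover of G with no restriction on isolated vertices, and let G' be the subdivision-plus-gadget graph from the reduction. Then D' = C ∪ {v₁ : v ∈ V} ∪ {v₂ : v ∈ V} is a total dominating set of G' of size |C| + 2|V|. -/
/-- if C is a vertex cover of G, then C ∪ {v₁ : v ∈ V} ∪ {v₂ : v ∈ V} is a
total dominating set of G' of size |C| + 2|V|. -/
theorem vertexCover_gives_tds {V : Type*} [Fintype V] (G : SimpleGraph V)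
    (C : Set V) (hC : ∀ u w : V, G.Adj u w → u ∈ C ∨ w ∈ C) :
    (∀ x : RedV V G, ∃ d ∈ (Sum.inl '' C ∪
        {y : RedV V G | ∃ v : V, y = Sum.inr (Sum.inr (v, (0 : Fin 4)))} ∪
        {y : RedV V G | ∃ v : V, y = Sum.inr (Sum.inr (v, (1 : Fin 4)))}),
      (redGraph G).Adj x d) ∧
    (Sum.inl '' C ∪
        {y : RedV V G | ∃ v : V, y = Sum.inr (Sum.inr (v, (0 : Fin 4)))} ∪
        {y : RedV V G | ∃ v : V, y = Sum.inr (Sum.inr (v, (1 : Fin 4)))}).ncard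
      = C.ncard + 2 * Nat.card V := by
  constructor
  · intro x
    match x with
    | Sum.inl v =>
        refine ⟨Sum.inr (Sum.inr (v, 0)), ?_, ?_⟩
        · left; right; exact ⟨v, rfl⟩
        · refine ⟨by simp, ?_⟩
          left; exact ⟨rfl, rfl⟩
    | Sum.inr (Sum.inl e) =>
        obtain ⟨s, hs⟩ := e
        induction s using Sym2.ind with
        | _ u w =>
          rw [SimpleGraph.mem_edgeSet] at hs
          rcases hC u w hs with h | h
          · exact ⟨Sum.inl u, Or.inl (Or.inl ⟨u, h, rfl⟩),
              ⟨by simp, Or.inr (by simp)⟩⟩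
          · exact ⟨Sum.inl w, Or.inl (Or.inl ⟨w, h, rfl⟩),
              ⟨by simp, Or.inr (by simp)⟩⟩
    | Sum.inr (Sum.inr (v, i)) =>
        fin_cases i
        · refine ⟨Sum.inr (Sum.inr (v, 1)), ?_, ?_⟩
          · right; exact ⟨v, rfl⟩
          · exact ⟨by simp, Or.inl ⟨rfl, Or.inl ⟨rfl, rfl⟩⟩⟩
        · refine ⟨Sum.inr (Sum.inr (v, 0)), ?_, ?_⟩
          · left; right; exact ⟨v, rfl⟩
          · exact ⟨by simp, Or.inr ⟨rfl, Or.inl ⟨rfl, rfl⟩⟩⟩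
        · refine ⟨Sum.inr (Sum.inr (v, 0)), ?_, ?_⟩
          · left; right; exact ⟨v, rfl⟩
          · exact ⟨by simp, Or.inr ⟨rfl, Or.inr (Or.inl ⟨rfl, rfl⟩)⟩⟩
        · refine ⟨Sum.inr (Sum.inr (v, 1)), ?_, ?_⟩
          · right; exact ⟨v, rfl⟩
          · exact ⟨by simp, Or.inr ⟨rfl, Or.inr (Or.inr ⟨rfl, rfl⟩)⟩⟩
  · have hB : {y : RedV V G | ∃ v : V, y = Sum.inr (Sum.inr (v, (0 : Fin 4)))}
        = Set.range (fun v : V => (Sum.inr (Sum.inr (v, (0 : Fin 4))) : RedV V G)) := by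
      ext y; simp [eq_comm]
    have hD : {y : RedV V G | ∃ v : V, y = Sum.inr (Sum.inr (v, (1 : Fin 4)))}
        = Set.range (fun v : V => (Sum.inr (Sum.inr (v, (1 : Fin 4))) : RedV V G)) := by
      ext y; simp [eq_comm]
    rw [hB, hD]
    have hinjB : Function.Injective
        (fun v : V => (Sum.inr (Sum.inr (v, (0 : Fin 4))) : RedV V G)) := by
      intro a b h; simpa using h
    have hinjD : Function.Injective
        (fun v : V => (Sum.inr (Sum.inr (v, (1 : Fin 4))) : RedV V G)) := by
      intro a b h; simpa using h
    have hfC : (Sum.inl '' C : Set (RedV V G)).Finite := (C.toFinite).image _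
    have hfB := (Set.finite_range (fun v : V => (Sum.inr (Sum.inr (v, (0 : Fin 4))) : RedV V G)))
    have hfD := (Set.finite_range (fun v : V => (Sum.inr (Sum.inr (v, (1 : Fin 4))) : RedV V G)))
    have hdisjBD : Disjoint
        (Set.range (fun v : V => (Sum.inr (Sum.inr (v, (0 : Fin 4))) : RedV V G)))
        (Set.range (fun v : V => (Sum.inr (Sum.inr (v, (1 : Fin 4))) : RedV V G))) := by
      rw [Set.disjoint_iff_forall_ne]
      rintro _ ⟨a, rfl⟩ _ ⟨b, rfl⟩ h
      simp at h
    have hdisjA : Disjoint (Sum.inl '' C : Set (RedV V G))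
        (Set.range (fun v : V => (Sum.inr (Sum.inr (v, (0 : Fin 4))) : RedV V G)) ∪
         Set.range (fun v : V => (Sum.inr (Sum.inr (v, (1 : Fin 4))) : RedV V G))) := by
      rw [Set.disjoint_iff_forall_ne]
      rintro _ ⟨a, _, rfl⟩ y hy
      rcases hy with ⟨b, rfl⟩ | ⟨b, rfl⟩ <;> simp
    rw [Set.union_assoc, Set.ncard_union_eq hdisjA hfC (hfB.union hfD),
      Set.ncard_union_eq hdisjBD hfB hfD,
      Set.ncard_image_of_injective _ Sum.inl_injective]
    have e1 : (Set.range fun v : V => (Sum.inr (Sum.inr (v, (0 : Fin 4))) : RedV V G)).ncard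
        = Nat.card V := by
      rw [← Nat.card_coe_set_eq, Nat.card_range_of_injective hinjB]
    have e2 : (Set.range fun v : V => (Sum.inr (Sum.inr (v, (1 : Fin 4))) : RedV V G)).ncard
        = Nat.card V := by
      rw [← Nat.card_coe_set_eq, Nat.card_range_of_injective hinjD]
    rw [e1, e2]; ring
end

section
/- Let G = (V,E) be a graph and let G' be the subdivision-plus-gadget graph from the reduction. If D' is a total dominating set of G' of size k', then D' ∩ V is a vertex cover of G of size at most k' − 2|V|. -/
/-- if D' is a total dominating set of G' of size k', then D' ∩ V is a
vertex cover of G of size at most k' − 2|V|. -/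
theorem tds_gives_vertexCover {V : Type*} [Fintype V] (G : SimpleGraph V)
    (D : Set (RedV V G)) (k' : ℕ) (hcard : D.ncard = k')
    (hD : ∀ x : RedV V G, ∃ d ∈ D, (redGraph G).Adj x d) :
    (∀ u w : V, G.Adj u w → Sum.inl u ∈ D ∨ Sum.inl w ∈ D) ∧
      {u : V | Sum.inl u ∈ D}.ncard ≤ k' - 2 * Nat.card V := by
  constructor
  · intro u w huw
    obtain ⟨d, hdD, hadj⟩ := hD (Sum.inr (Sum.inl ⟨s(u, w), huw⟩))
    rw [redGraph, SimpleGraph.fromRel_adj] at hadj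
    obtain ⟨hne, h | h⟩ := hadj
    · rcases d with u' | e' | ⟨v, i⟩ <;> simp_all
    · rcases d with u' | e' | ⟨v, i⟩
      · simp only at h
        rw [Sym2.mem_iff] at h
        rcases h with rfl | rfl
        · exact Or.inl hdD
        · exact Or.inr hdD
      · simp_all
      · simp_all
  · -- v₁ = (v,0) and v₂ = (v,1) are in D for every v
    have h0 : ∀ v : V, (Sum.inr (Sum.inr (v, (0 : Fin 4))) : RedV V G) ∈ D := by
      intro v
      obtain ⟨d, hdD, hadj⟩ := hD (Sum.inr (Sum.inr (v, (2 : Fin 4))))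
      rw [redGraph, SimpleGraph.fromRel_adj] at hadj
      obtain ⟨hne, h | h⟩ := hadj <;>
        rcases d with u' | e' | ⟨w, i⟩ <;> simp_all <;>
        obtain ⟨rfl, h⟩ := h <;> simp_all
    have h1 : ∀ v : V, (Sum.inr (Sum.inr (v, (1 : Fin 4))) : RedV V G) ∈ D := by
      intro v
      obtain ⟨d, hdD, hadj⟩ := hD (Sum.inr (Sum.inr (v, (3 : Fin 4))))
      rw [redGraph, SimpleGraph.fromRel_adj] at hadj
      obtain ⟨hne, h | h⟩ := hadj <;>
        rcases d with u' | e' | ⟨w, i⟩ <;> simp_all <;>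
        obtain ⟨rfl, h⟩ := h <;> simp_all
    set A : Set (RedV V G) := Sum.inl '' {u : V | Sum.inl u ∈ D} with hA
    set B0 : Set (RedV V G) := Set.range (fun v : V => Sum.inr (Sum.inr (v, (0 : Fin 4)))) with hB0
    set B1 : Set (RedV V G) := Set.range (fun v : V => Sum.inr (Sum.inr (v, (1 : Fin 4)))) with hB1
    have hinj0 : Function.Injective (fun v : V => (Sum.inr (Sum.inr (v, (0 : Fin 4))) : RedV V G)) := by
      intro a b hab; simpa using hab
    have hinj1 : Function.Injective (fun v : V => (Sum.inr (Sum.inr (v, (1 : Fin 4))) : RedV V G)) := by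
      intro a b hab; simpa using hab
    have hsub : A ∪ (B0 ∪ B1) ⊆ D := by
      rintro x (⟨u, hu, rfl⟩ | (⟨v, rfl⟩ | ⟨v, rfl⟩))
      · exact hu
      · exact h0 v
      · exact h1 v
    have hd01 : Disjoint B0 B1 := by
      rw [Set.disjoint_left]
      rintro x ⟨v, rfl⟩ ⟨w, hw⟩
      simp at hw
    have hdAB : Disjoint A (B0 ∪ B1) := by
      rw [Set.disjoint_left]
      rintro x ⟨u, hu, rfl⟩ (⟨v, hv⟩ | ⟨v, hv⟩) <;> simp_all
    have hcB0 : B0.ncard = Nat.card V := by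
      rw [hB0, ← Set.image_univ, Set.ncard_image_of_injective _ hinj0, Set.ncard_univ]
    have hcB1 : B1.ncard = Nat.card V := by
      rw [hB1, ← Set.image_univ, Set.ncard_image_of_injective _ hinj1, Set.ncard_univ]
    have hcA : A.ncard = {u : V | Sum.inl u ∈ D}.ncard :=
      Set.ncard_image_of_injective _ Sum.inl_injective
    have hle : (A ∪ (B0 ∪ B1)).ncard ≤ D.ncard :=
      Set.ncard_le_ncard hsub (Set.toFinite D)
    rw [Set.ncard_union_eq hdAB (Set.toFinite _) (Set.toFinite _),
      Set.ncard_union_eq hd01 (Set.toFinite _) (Set.toFinite _)] at hle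
    omega
end

section
/- Let G be a graph and v, w distinct vertices such that no subset of N₂(v,w) ∪ N₃(v,w) of size at most 3 dominates all of N₃(v,w) (i.e., there is no N₃-total dominating set of size at most 3 avoiding v and w). Then every total dominating set D of G either contains v or w, or D contains at least 4 vertices of N₂(v,w) ∪ N₃(v,w); consequently, there always exists a total dominating set D' of G with |D'| ≤ |D| and {v,w} ∩ D' ≠ ∅. -/
/-- The joint open neighborhood N(v,w) = (N(v) ∪ N(w)) \ {v,w}. -/
def Npair {V : Type*} (G : SimpleGraph V) (v w : V) : Set V :=
  (G.neighborSet v ∪ G.neighborSet w) \ {v, w}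

def NP1 {V : Type*} (G : SimpleGraph V) (v w : V) : Set V :=
  {u | u ∈ Npair G v w ∧ ∃ x, G.Adj u x ∧ x ∉ Npair G v w ∪ {v, w}}

def NP2 {V : Type*} (G : SimpleGraph V) (v w : V) : Set V :=
  {u | u ∈ Npair G v w ∧ u ∉ NP1 G v w ∧ ∃ x ∈ NP1 G v w, G.Adj u x}

def NP3 {V : Type*} (G : SimpleGraph V) (v w : V) : Set V :=
  Npair G v w \ (NP1 G v w ∪ NP2 G v w)

/-- if no subset of N₂(v,w) ∪ N₃(v,w) of size at most 3 dominates N₃(v,w),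
then every total dominating set contains v or w, or at least 4 vertices of
N₂(v,w) ∪ N₃(v,w); and one can always obtain an equally small total dominating set
meeting {v,w}. -/
theorem fact1_tds_meets_pair {V : Type*} (G : SimpleGraph V) (v w : V) (hvw : v ≠ w)
    (hN3 : (NP3 G v w).Nonempty)
    (hv : ∃ s, G.Adj v s) (hw : ∃ t, G.Adj w t)
    (hno : ¬ ∃ T : Set V, T ⊆ NP2 G v w ∪ NP3 G v w ∧ T.ncard ≤ 3 ∧
      ∀ u ∈ NP3 G v w, ∃ x ∈ T, G.Adj u x)
    (D : Set V) (hDfin : D.Finite) (hD : ∀ u : V, ∃ d ∈ D, G.Adj u d) :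
    (v ∈ D ∨ w ∈ D ∨ 4 ≤ (D ∩ (NP2 G v w ∪ NP3 G v w)).ncard) ∧
    ∃ D' : Set V, D'.Finite ∧ (∀ u : V, ∃ d ∈ D', G.Adj u d) ∧
      D'.ncard ≤ D.ncard ∧ (v ∈ D' ∨ w ∈ D') := by
  classical
  set T := D ∩ (NP2 G v w ∪ NP3 G v w) with hT
  have hnot1 : ∀ x, x ∈ NP2 G v w ∪ NP3 G v w → x ∈ Npair G v w ∧ x ∉ NP1 G v w := by
    rintro x (hx | hx)
    · exact ⟨hx.1, hx.2.1⟩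
    · exact ⟨hx.1, fun h => hx.2 (Or.inl h)⟩
  have hclosed : ∀ x u, x ∈ NP2 G v w ∪ NP3 G v w → G.Adj x u →
      u ∈ Npair G v w ∪ {v, w} := by
    intro x u hx hadj
    by_contra hu
    exact (hnot1 x hx).2 ⟨(hnot1 x hx).1, u, hadj, hu⟩
  have key : v ∉ D → w ∉ D → 4 ≤ T.ncard := by
    intro hvD hwD
    by_contra hlt
    push_neg at hlt
    apply hno
    refine ⟨T, Set.inter_subset_right, by omega, ?_⟩
    intro u hu
    obtain ⟨d, hdD, hadj⟩ := hD u
    refine ⟨d, ⟨hdD, ?_⟩, hadj⟩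
    have hu' : u ∈ Npair G v w := hu.1
    have hu1 : u ∉ NP1 G v w := fun h => hu.2 (Or.inl h)
    have hd : d ∈ Npair G v w ∪ {v, w} := by
      by_contra hd
      exact hu1 ⟨hu', d, hadj, hd⟩
    have hdN : d ∈ Npair G v w := by
      rcases hd with h | h
      · exact h
      · rcases h with h | h
        · exact absurd (h ▸ hdD) hvD
        · exact absurd (h ▸ hdD) hwD
    by_cases hd2 : d ∈ NP2 G v w
    · exact Or.inl hd2
    · refine Or.inr ⟨hdN, ?_⟩
      rintro (hd1 | hd2')
      · exact hu.2 (Or.inr ⟨hu', hu1, d, hd1, hadj⟩)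
      · exact hd2 hd2'
  have hNpairAdj : ∀ u ∈ Npair G v w, G.Adj u v ∨ G.Adj u w := by
    rintro u ⟨h, -⟩
    rcases h with h | h
    · exact Or.inl h.symm
    · exact Or.inr h.symm
  constructor
  · by_cases hvD : v ∈ D
    · exact Or.inl hvD
    by_cases hwD : w ∈ D
    · exact Or.inr (Or.inl hwD)
    exact Or.inr (Or.inr (key hvD hwD))
  · by_cases hvD : v ∈ D
    · exact ⟨D, hDfin, hD, le_rfl, Or.inl hvD⟩
    by_cases hwD : w ∈ D
    · exact ⟨D, hDfin, hD, le_rfl, Or.inr hwD⟩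
    obtain ⟨s, hs⟩ := hv
    obtain ⟨t, ht⟩ := hw
    have h4 := key hvD hwD
    refine ⟨(D \ T) ∪ {v, w, s, t}, ?_, ?_, ?_, Or.inr (by simp)⟩
    · exact (hDfin.diff : (D \ T).Finite).union ((((Set.finite_singleton t).insert s).insert w).insert v)
    · intro u
      obtain ⟨d, hdD, hadj⟩ := hD u
      by_cases hdT : d ∈ T
      · have hu : u ∈ Npair G v w ∪ {v, w} := hclosed d u hdT.2 hadj.symm
        rcases hu with hu | hu
        · rcases hNpairAdj u hu with h | h
          · exact ⟨v, Or.inr (by simp), h⟩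
          · exact ⟨w, Or.inr (by simp), h⟩
        · rcases hu with hu | hu
          · exact ⟨s, Or.inr (by simp), hu ▸ hs⟩
          · exact ⟨t, Or.inr (by simp), hu ▸ ht⟩
      · exact ⟨d, Or.inl ⟨hdD, hdT⟩, hadj⟩
    · have hTD : T ⊆ D := Set.inter_subset_left
      have hdiff : (D \ T).ncard = D.ncard - T.ncard := Set.ncard_diff hTD (hDfin.subset hTD)
      have hTle : T.ncard ≤ D.ncard := Set.ncard_le_ncard hTD hDfin
      have hle : ((D \ T) ∪ {v, w, s, t} : Set V).ncard ≤ (D \ T).ncard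
          + ({v, w, s, t} : Set V).ncard :=
        Set.ncard_union_le _ _
      have hcard4 : ({v, w, s, t} : Set V).ncard ≤ 4 := by
        calc ({v, w, s, t} : Set V).ncard
            ≤ ({w, s, t} : Set V).ncard + 1 := Set.ncard_insert_le _ _
          _ ≤ ({s, t} : Set V).ncard + 1 + 1 := by
              exact Nat.add_le_add_right (Set.ncard_insert_le _ _) 1
          _ ≤ ({t} : Set V).ncard + 1 + 1 + 1 := by
              exact Nat.add_le_add_right (Nat.add_le_add_right (Set.ncard_insert_le _ _) 1) 1
          _ = 4 := by simp
      omega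
end

section
/- Let G be a graph with no isolated vertices, v, w distinct vertices, and suppose: (i) no set of at most 3 vertices contained in N₂(v,w) ∪ N₃(v,w) dominates N₃(v,w), and (ii) no set of the form {w}, {w,u}, or {w,u,u'} with u, u' ∈ N₂(v,w) ∪ N₃(v,w) dominates N₃(v,w). Then every minimum total dominating set of G can be modified, without increasing its size, into a total dominating set containing v. -/
/-- Fact 2: if no subset of N₂(v,w) ∪ N₃(v,w) of size at most 3 dominates
N₃(v,w), and no set of size at most 3 containing w and otherwise contained in
N₂(v,w) ∪ N₃(v,w) dominates N₃(v,w) (i.e. 𝒟_w = ∅), then every minimum total dominating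
set can be modified, without increasing its size, into a total dominating set containing v. -/
theorem fact2_tds_contains_v {V : Type*} (G : SimpleGraph V) (v w : V) (hvw : v ≠ w)
    (hiso : ∀ x : V, ∃ y : V, G.Adj x y)
    (hN3 : (NP3 G v w).Nonempty)
    (hno : ¬ ∃ T : Set V, T ⊆ NP2 G v w ∪ NP3 G v w ∧ T.ncard ≤ 3 ∧
      ∀ u ∈ NP3 G v w, ∃ x ∈ T, G.Adj u x)
    (hDw : ¬ ∃ T : Set V, w ∈ T ∧ T \ {w} ⊆ NP2 G v w ∪ NP3 G v w ∧ T.ncard ≤ 3 ∧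
      ∀ u ∈ NP3 G v w, ∃ x ∈ T, G.Adj u x)
    (D : Set V) (hDfin : D.Finite) (hD : ∀ u : V, ∃ d ∈ D, G.Adj u d)
    (hmin : ∀ E : Set V, E.Finite → (∀ u : V, ∃ d ∈ E, G.Adj u d) → D.ncard ≤ E.ncard) :
    ∃ D' : Set V, D'.Finite ∧ (∀ u : V, ∃ d ∈ D', G.Adj u d) ∧
      D'.ncard ≤ D.ncard ∧ v ∈ D' := by
  classical
  by_cases hv : v ∈ D
  · exact ⟨D, hDfin, hD, le_refl _, hv⟩
  obtain ⟨zv, hzv⟩ := hiso v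
  obtain ⟨zw, hzw⟩ := hiso w
  set S : Set V := NP2 G v w ∪ NP3 G v w with hS
  have hSsub : S ⊆ Npair G v w := by
    rintro x (hx | hx)
    · exact hx.1
    · exact hx.1
  have hSN1 : ∀ x ∈ S, x ∉ NP1 G v w := by
    rintro x (hx | hx)
    · exact hx.2.1
    · exact fun h => hx.2 (Or.inl h)
  have hnbr : ∀ x ∈ S, ∀ y, G.Adj x y → y ∈ Npair G v w ∪ {v, w} := by
    intro x hx y hxy
    by_contra hy
    exact hSN1 x hx ⟨hSsub hx, y, hxy, hy⟩
  have hwS : w ∉ S := fun h => (hSsub h).2 (Or.inr rfl)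
  set X : Set V := D ∩ S with hXdef
  have hXsub : X ⊆ D := Set.inter_subset_left
  have hXfin : X.Finite := hDfin.subset hXsub
  have key : ∀ u ∈ NP3 G v w, ∀ d ∈ D, G.Adj u d → d ∈ X ∨ d = w := by
    intro u hu d hd hadj
    have huN : u ∈ Npair G v w := hu.1
    have huN1 : u ∉ NP1 G v w := fun h => hu.2 (Or.inl h)
    have huN2 : u ∉ NP2 G v w := fun h => hu.2 (Or.inr h)
    have hd' : d ∈ Npair G v w ∪ {v, w} := by
      by_contra h
      exact huN1 ⟨huN, d, hadj, h⟩
    rcases hd' with hdN | hdvw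
    · have hdN1 : d ∉ NP1 G v w := fun h => huN2 ⟨huN, huN1, d, h, hadj⟩
      left
      refine ⟨hd, ?_⟩
      by_cases hd2 : d ∈ NP2 G v w
      · exact Or.inl hd2
      · exact Or.inr ⟨hdN, fun h => h.elim hdN1 hd2⟩
    · rcases hdvw with h | h
      · exact absurd (h ▸ hd) hv
      · exact Or.inr h
  have hX3 : (w ∈ D ∧ 3 ≤ X.ncard) ∨ (w ∉ D ∧ 4 ≤ X.ncard) := by
    by_cases hw : w ∈ D
    · left
      refine ⟨hw, ?_⟩
      by_contra hlt
      push_neg at hlt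
      apply hDw
      refine ⟨insert w X, Set.mem_insert _ _, ?_, ?_, ?_⟩
      · rintro x ⟨hx1, hx2⟩
        rcases hx1 with rfl | hx1
        · exact absurd rfl hx2
        · exact hx1.2
      · calc (insert w X).ncard ≤ X.ncard + 1 := Set.ncard_insert_le _ _
          _ ≤ 3 := by omega
      · intro u hu
        obtain ⟨d, hd, hadj⟩ := hD u
        rcases key u hu d hd hadj with h | rfl
        · exact ⟨d, Set.mem_insert_of_mem _ h, hadj⟩
        · exact ⟨d, Set.mem_insert _ _, hadj⟩
    · right
      refine ⟨hw, ?_⟩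
      by_contra hlt
      push_neg at hlt
      apply hno
      refine ⟨X, fun x hx => hx.2, by omega, ?_⟩
      intro u hu
      obtain ⟨d, hd, hadj⟩ := hD u
      rcases key u hu d hd hadj with h | rfl
      · exact ⟨d, h, hadj⟩
      · exact absurd hd hw
  set A : Set V := D \ S with hAdef
  have hAfin : A.Finite := hDfin.diff
  have hDX : A = D \ X := by
    ext x
    simp only [hAdef, hXdef, Set.mem_diff, Set.mem_inter_iff]
    tauto
  have hcard : A.ncard + X.ncard = D.ncard := by
    rw [hDX]
    exact Set.ncard_diff_add_ncard_of_subset hXsub hDfin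
  refine ⟨A ∪ {v, w, zv, zw}, hAfin.union (Set.toFinite _), ?_, ?_, ?_⟩
  · intro u
    obtain ⟨d, hd, hadj⟩ := hD u
    by_cases hdS : d ∈ S
    · have hu' : u ∈ Npair G v w ∪ {v, w} := hnbr d hdS u hadj.symm
      rcases hu' with huN | huvw
      · rcases huN.1 with h | h
        · exact ⟨v, Or.inr (by simp), h.symm⟩
        · exact ⟨w, Or.inr (by simp), h.symm⟩
      · rcases huvw with h | h
        · exact ⟨zv, Or.inr (by simp), h ▸ hzv⟩
        · exact ⟨zw, Or.inr (by simp), h ▸ hzw⟩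
    · exact ⟨d, Or.inl ⟨hd, hdS⟩, hadj⟩
  · rcases hX3 with ⟨hw, h3⟩ | ⟨hw, h4⟩
    · have hwA : w ∈ A := ⟨hw, hwS⟩
      have heq : A ∪ {v, w, zv, zw} = A ∪ {v, zv, zw} := by
        ext x
        simp only [Set.mem_union, Set.mem_insert_iff, Set.mem_singleton_iff]
        constructor
        · rintro (h | h | rfl | h) <;> tauto
        · tauto
      rw [heq]
      have h1 : (A ∪ {v, zv, zw}).ncard ≤ A.ncard + ({v, zv, zw} : Set V).ncard :=
        Set.ncard_union_le _ _
      have h2 : ({v, zv, zw} : Set V).ncard ≤ 3 := by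
        calc ({v, zv, zw} : Set V).ncard ≤ ({zv, zw} : Set V).ncard + 1 :=
              Set.ncard_insert_le _ _
          _ ≤ (({zw} : Set V).ncard + 1) + 1 := by
              have := Set.ncard_insert_le zv ({zw} : Set V)
              omega
          _ ≤ 3 := by simp
      omega
    · have h1 : (A ∪ {v, w, zv, zw}).ncard ≤ A.ncard + ({v, w, zv, zw} : Set V).ncard :=
        Set.ncard_union_le _ _
      have h2 : ({v, w, zv, zw} : Set V).ncard ≤ 4 := by
        have a1 := Set.ncard_insert_le v ({w, zv, zw} : Set V)
        have a2 := Set.ncard_insert_le w ({zv, zw} : Set V)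
        have a3 := Set.ncard_insert_le zv ({zw} : Set V)
        have a4 : ({zw} : Set V).ncard = 1 := Set.ncard_singleton _
        omega
      omega
  · exact Or.inr (by simp)
end

section
/- Let G be a graph with no isolated vertices and let D be a dominating set of G such that at least 4 vertices of D lie in a set X of vertices with the property that every vertex of X has all its neighbors in N(v) ∪ N(w) ∪ {v,w} for two fixed vertices v,w. Then there is a total dominating set D' of G with |D'| ≤ |D| containing both v and w, obtained by replacing 4 vertices of D ∩ X by v, w, a neighbor s of v, and a neighbor t of w. -/
/-- if a total dominating set D contains at least 4 vertices of a set X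
whose members have all their neighbors in N(v) ∪ N(w) ∪ {v,w}, then replacing 4 vertices
of D ∩ X by v, w, a neighbor s of v and a neighbor t of w yields a total dominating set
D' with |D'| ≤ |D| containing v and w. -/
theorem exchange_four_confined_vertices {V : Type*} (G : SimpleGraph V)
    (hiso : ∀ x : V, ∃ y : V, G.Adj x y)
    (v w : V) (hvw : v ≠ w)
    (X : Set V) (hX : X ⊆ G.neighborSet v ∪ G.neighborSet w)
    (hXconf : ∀ u ∈ X, G.neighborSet u ⊆ G.neighborSet v ∪ G.neighborSet w ∪ {v, w})
    (s t : V) (hs : G.Adj v s) (ht : G.Adj w t)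
    (D : Set V) (hDfin : D.Finite)
    (hD : ∀ x : V, ∃ d ∈ D, G.Adj x d)
    (h4 : 4 ≤ (D ∩ X).ncard) :
    ∃ Y ⊆ D ∩ X, Y.ncard = 4 ∧
      (∀ x : V, ∃ d ∈ (D \ Y) ∪ {v, w, s, t}, G.Adj x d) ∧
      ((D \ Y) ∪ {v, w, s, t}).ncard ≤ D.ncard ∧
      v ∈ (D \ Y) ∪ {v, w, s, t} ∧ w ∈ (D \ Y) ∪ {v, w, s, t} := by
  obtain ⟨Y, hYsub, hYcard⟩ := Set.exists_subset_card_eq h4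
  have hYD : Y ⊆ D := hYsub.trans Set.inter_subset_left
  have hYX : Y ⊆ X := hYsub.trans Set.inter_subset_right
  have hYfin : Y.Finite := hDfin.subset hYD
  refine ⟨Y, hYsub, hYcard, ?_, ?_, ?_, ?_⟩
  · intro x
    by_cases hx : ∃ d ∈ D \ Y, G.Adj x d
    · obtain ⟨d, hd, hadj⟩ := hx
      exact ⟨d, Or.inl hd, hadj⟩
    · push_neg at hx
      obtain ⟨d, hdD, hadj⟩ := hD x
      have hdY : d ∈ Y := by
        by_contra h
        exact (hx d ⟨hdD, h⟩) hadj
      have hxmem : x ∈ G.neighborSet v ∪ G.neighborSet w ∪ {v, w} :=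
        hXconf d (hYX hdY) hadj.symm
      rcases hxmem with (hv | hw) | hvw'
      · exact ⟨v, Or.inr (by simp), hv.symm⟩
      · exact ⟨w, Or.inr (by simp), hw.symm⟩
      · rcases hvw' with rfl | rfl
        · exact ⟨s, Or.inr (by simp), hs⟩
        · exact ⟨t, Or.inr (by simp), ht⟩
  · have h4D : 4 ≤ D.ncard :=
      h4.trans (Set.ncard_le_ncard Set.inter_subset_left hDfin)
    have hvw4 : ({v, w, s, t} : Set V).ncard ≤ 4 := by
      apply (Set.ncard_insert_le _ _).trans
      have : ({w, s, t} : Set V).ncard ≤ 3 := by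
        apply (Set.ncard_insert_le _ _).trans
        have : ({s, t} : Set V).ncard ≤ 2 := by
          apply (Set.ncard_insert_le _ _).trans
          simp
        omega
      omega
    have hunion : ((D \ Y) ∪ {v, w, s, t}).ncard ≤ (D \ Y).ncard + 4 := by
      refine (Set.ncard_union_le _ _).trans ?_
      omega
    have hdiff : (D \ Y).ncard = D.ncard - 4 := by
      rw [Set.ncard_diff hYD hYfin, hYcard]
    omega
  · exact Or.inr (by simp)
  · exact Or.inr (by simp)
end
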